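/- Let M be a finitely generated ℤ^d-graded S_A-module admitting a filtration 0 = M_0 ⊆ M_1 ⊆ ⋯ ⊆ M_r = M by graded submodules such that for each i there is a face F_i ⪯ A and α_i ∈ ℤ^d with M_i/M_{i−1} ≅ S_{F_i}(−α_i) as graded modules (S_{F_i} = ℂ[ℕF_i], regarded as an S_A-module via the surjection S_A → S_{F_i} killing t^{a_j} for a_j ∉ F_i, and (−α_i) the grading shift placing the generator in degree α_i). Then for every face H ⪯ A: qdeg M[∂^{−H}] = ⋃_{i : F_i ⪰ H} (ℂF_i + α_i). -/

import Mathlib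

/-!
Common setup: `A` is a `d × n` integer matrix, given by its columns `a : Fin n → Lat d`,
with `ℤA = ℤ^d` (`SpansZ`) and `ℕA` pointed (`Pointed`).  Faces, semigroups, graded
modules, quasidegree sets, the dualizing complex `ω•_{S_A}` and the Ishida complexes
`℧•_F` are formalized below; all cohomology statements are expressed via the
(ℤ^d-)graded components of these complexes.
-/

namespace GKZ

open scoped Classical

noncomputable section

abbrev Lat (d : ℕ) := Fin d → ℤ
abbrev CS (d : ℕ) := Fin d → ℂ
abbrev Laur (d : ℕ) := AddMonoidAlgebra ℂ (Lat d)

/-- Inclusion ℤ^d ⊆ ℂ^d. -/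
def toC {d : ℕ} (α : Lat d) : CS d := fun i => (α i : ℂ)
/-- Inclusion ℤ^d ⊆ ℝ^d. -/
def toR {d : ℕ} (α : Lat d) : Fin d → ℝ := fun i => (α i : ℝ)
/-- The monomial t^α in the Laurent polynomial ring ℂ[ℤ^d]. -/
def mono {d : ℕ} (α : Lat d) : Laur d := AddMonoidAlgebra.single α 1

variable {d n : ℕ}

/-- The affine semigroup ℕA generated by the columns of `A`. -/
def NA (a : Fin n → Lat d) : AddSubmonoid (Lat d) := AddSubmonoid.closure (Set.range a)

/-- ℕA is pointed: ℕA ∩ (−ℕA) = {0}. -/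
def Pointed (a : Fin n → Lat d) : Prop := ∀ x ∈ NA a, -x ∈ NA a → x = 0

/-- ℤA = ℤ^d. -/
def SpansZ (a : Fin n → Lat d) : Prop :=
  AddSubgroup.closure (Set.range a) = (⊤ : AddSubgroup (Lat d))

/-- The real cone ℝ₊F spanned by the columns indexed by `F`. -/
def cone (a : Fin n → Lat d) (F : Set (Fin n)) : Set (Fin d → ℝ) :=
  { x | ∃ c : Fin n → ℝ, (∀ i, 0 ≤ c i) ∧ (∀ i, i ∉ F → c i = 0) ∧ x = ∑ i, c i • toR (a i) }

/-- `F` is a face of `A`: ℝ₊F is a face of the cone ℝ₊A, and `F` consists of all the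
columns of `A` lying on that face. -/
def IsFace (a : Fin n → Lat d) (F : Set (Fin n)) : Prop :=
  (∀ x y, x ∈ cone a Set.univ → y ∈ cone a Set.univ →
      x + y ∈ cone a F → x ∈ cone a F ∧ y ∈ cone a F) ∧
  (∀ i, toR (a i) ∈ cone a F → i ∈ F)

/-- ℕF. -/
def NFace (a : Fin n → Lat d) (F : Set (Fin n)) : AddSubmonoid (Lat d) :=
  AddSubmonoid.closure (a '' F)

/-- ℤF. -/
def ZFace (a : Fin n → Lat d) (F : Set (Fin n)) : AddSubgroup (Lat d) :=
  AddSubgroup.closure (a '' F)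

/-- ℂF ⊆ ℂ^d. -/
def CFace (a : Fin n → Lat d) (F : Set (Fin n)) : Submodule ℂ (CS d) :=
  Submodule.span ℂ (toC '' (a '' F))

/-- d_F, the rank of ℤF. -/
def dimF (a : Fin n → Lat d) (F : Set (Fin n)) : ℕ :=
  Module.finrank ℤ (Submodule.span ℤ (a '' F))

/-- σ_F, the sum of the columns of F. -/
def sigmaF (a : Fin n → Lat d) (F : Set (Fin n)) : Lat d :=
  ∑ i : Fin n, if i ∈ F then a i else 0

/-- ε_A = a_1 + ⋯ + a_n. -/
def epsA (a : Fin n → Lat d) : Lat d := ∑ i : Fin n, a i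

/-- ℕA − ℕF ⊆ ℤ^d. -/
def NAmNF (a : Fin n → Lat d) (F : Set (Fin n)) : Set (Lat d) :=
  {γ | ∃ u ∈ NA a, ∃ v ∈ NFace a F, γ = u - v}

/-- ℕF − ℕA ⊆ ℤ^d. -/
def NFmNA (a : Fin n → Lat d) (F : Set (Fin n)) : Set (Lat d) :=
  {γ | ∃ u ∈ NFace a F, ∃ v ∈ NA a, γ = u - v}

/-- ℕF − ℕH ⊆ ℤ^d. -/
def NFmNH (a : Fin n → Lat d) (F H : Set (Fin n)) : Set (Lat d) :=
  {γ | ∃ u ∈ NFace a F, ∃ v ∈ NFace a H, γ = u - v}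

/-- ℕA is normal: ℕA = ℤ^d ∩ ℝ₊A. -/
def Normal (a : Fin n → Lat d) : Prop :=
  ∀ γ : Lat d, γ ∈ NA a ↔ toR γ ∈ cone a Set.univ

/-- The Zariski closure of a subset of ℂ^d. -/
def zClosure {d : ℕ} (T : Set (CS d)) : Set (CS d) :=
  {x | ∀ p : MvPolynomial (Fin d) ℂ, (∀ y ∈ T, MvPolynomial.eval y p = 0) →
    MvPolynomial.eval x p = 0}

def IsZClosed {d : ℕ} (Z : Set (CS d)) : Prop := zClosure Z ⊆ Z

/-- Irreducibility of a subset of ℂ^d in the Zariski topology. -/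
def ZIrred {d : ℕ} (Z : Set (CS d)) : Prop :=
  Z.Nonempty ∧ ∀ C₁ C₂ : Set (CS d), IsZClosed C₁ → IsZClosed C₂ →
    Z ⊆ C₁ ∪ C₂ → Z ⊆ C₁ ∨ Z ⊆ C₂

/-- Krull (topological) dimension of a subset of ℂ^d with the Zariski topology:
the Krull dimension of the poset of irreducible Zariski-closed subsets contained in it. -/
def zdim {d : ℕ} (Z : Set (CS d)) : WithBot ℕ∞ :=
  Order.krullDim {C : Set (CS d) // C ⊆ Z ∧ IsZClosed C ∧ ZIrred C}

/-- `Z` is an irreducible component of `W`: a maximal irreducible Zariski-closed subset. -/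
def IsIrredComp {d : ℕ} (Z W : Set (CS d)) : Prop :=
  Z ⊆ W ∧ IsZClosed Z ∧ ZIrred Z ∧
    ∀ Z' : Set (CS d), IsZClosed Z' → ZIrred Z' → Z ⊆ Z' → Z' ⊆ W → Z' = Z

/-- The type of faces of `A`. -/
def FaceT (a : Fin n → Lat d) := {G : Set (Fin n) // IsFace a G}

instance (a : Fin n → Lat d) : Finite (FaceT a) := by
  unfold FaceT; infer_instance

noncomputable instance (a : Fin n → Lat d) : Fintype (FaceT a) := Fintype.ofFinite _

/-- Degree set of the localization M[∂^{−G}] of the monomial module with degree set `E`: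
the set E − ℕG. -/
def locE (a : Fin n → Lat d) (E : Set (Lat d)) (G : Set (Fin n)) : Set (Lat d) :=
  {γ | ∃ f ∈ NFace a G, γ + f ∈ E}

/-- Functions supported on a subset, as a ℂ-submodule of the function space. -/
def funSupported {ι : Type*} (S : Set ι) : Submodule ℂ (ι → ℂ) where
  carrier := {c | ∀ i, i ∉ S → c i = 0}
  add_mem' := by
    intro x y hx hy i hi
    simp only [Set.mem_setOf_eq] at hx hy
    simp [Pi.add_apply, hx i hi, hy i hi]
  zero_mem' := by intro i _; rfl
  smul_mem' := by
    intro r x hx i hi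
    simp only [Set.mem_setOf_eq] at hx
    simp [Pi.smul_apply, hx i hi]

/-- The degree-γ part of the term of the Ishida complex ℧•_F(M) (base face `F`, monomial
module with degree set `E`) whose summands are indexed by the faces of absolute dimension
`j` (cohomological degree `j − d_F`): functions on the faces `G ⊇ F` with `d_G = j` and
`γ ∈ E − ℕG`. -/
def ishChain (a : Fin n → Lat d) (E : Set (Lat d)) (F : Set (Fin n)) (j : ℤ) (γ : Lat d) :
    Submodule ℂ (FaceT a → ℂ) :=
  funSupported {G : FaceT a | F ⊆ G.1 ∧ (dimF a G.1 : ℤ) = j ∧ γ ∈ locE a E G.1}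

/-- The differential of the Ishida complex (in each ℤ^d-degree): the component from a face
`G'` into a face `G''` covering it is `ε G' G''` times the natural localization map. -/
def ishDelta (a : Fin n → Lat d) (ε : Set (Fin n) → Set (Fin n) → ℂ) :
    (FaceT a → ℂ) →ₗ[ℂ] (FaceT a → ℂ) where
  toFun c := fun G'' => ∑ G' : FaceT a,
    if G'.1 ⊆ G''.1 ∧ dimF a G''.1 = dimF a G'.1 + 1 then ε G'.1 G''.1 * c G' else 0
  map_add' x y := by
    funext G''
    simp only [Pi.add_apply, ← Finset.sum_add_distrib]
    refine Finset.sum_congr rfl fun G' _ => ?_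
    by_cases h : G'.1 ⊆ G''.1 ∧ dimF a G''.1 = dimF a G'.1 + 1
    · simp [h, mul_add]
    · simp [h]
  map_smul' r x := by
    funext G''
    simp only [Pi.smul_apply, smul_eq_mul, RingHom.id_apply, Finset.mul_sum]
    refine Finset.sum_congr rfl fun G' _ => ?_
    by_cases h : G'.1 ⊆ G''.1 ∧ dimF a G''.1 = dimF a G'.1 + 1
    · simp only [h, and_self, if_true]; ring
    · simp [h]

/-- Degree-γ cocycles of the Ishida complex at absolute dimension `j`. -/
def ishZ (a : Fin n → Lat d) (E : Set (Lat d)) (ε : Set (Fin n) → Set (Fin n) → ℂ)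
    (F : Set (Fin n)) (j : ℤ) (γ : Lat d) : Submodule ℂ (FaceT a → ℂ) :=
  ishChain a E F j γ ⊓ LinearMap.ker (ishDelta a ε)

/-- Degree-γ coboundaries of the Ishida complex at absolute dimension `j`. -/
def ishB (a : Fin n → Lat d) (E : Set (Lat d)) (ε : Set (Fin n) → Set (Fin n) → ℂ)
    (F : Set (Fin n)) (j : ℤ) (γ : Lat d) : Submodule ℂ (FaceT a → ℂ) :=
  Submodule.map (ishDelta a ε) (ishChain a E F (j - 1) γ)

/-- The degree-γ component of the cohomology of the Ishida complex ℧•_F(M) at absolute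
dimension `j` (cohomological degree `j − d_F`). -/
abbrev ishH (a : Fin n → Lat d) (E : Set (Lat d)) (ε : Set (Fin n) → Set (Fin n) → ℂ)
    (F : Set (Fin n)) (j : ℤ) (γ : Lat d) :=
  ↥(ishZ a E ε F j γ) ⧸
    Submodule.comap (ishZ a E ε F j γ).subtype (ishB a E ε F j γ)

/-- Nonvanishing of the degree-γ component of the cohomology of the Ishida complex. -/
def ishHne (a : Fin n → Lat d) (E : Set (Lat d)) (ε : Set (Fin n) → Set (Fin n) → ℂ)
    (F : Set (Fin n)) (j : ℤ) (γ : Lat d) : Prop :=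
  ¬ (ishZ a E ε F j γ ≤ ishB a E ε F j γ)

/-- Degree-γ part of the term of ω•_{S_A} in cohomological degree `i`:
functions on the faces `G` with `d_{A/G} = i` and `γ ∈ ℕG − ℕA`. -/
def omChain (a : Fin n → Lat d) (i : ℤ) (γ : Lat d) : Submodule ℂ (FaceT a → ℂ) :=
  funSupported {G : FaceT a | (dimF a G.1 : ℤ) = (d : ℤ) - i ∧ γ ∈ NFmNA a G.1}

/-- Degree-γ part of the differential of ω•_{S_A}: the component from a face `G'` to a face
`G''` covered by it is `ε G' G''` times the natural projection ℂ{ℕG'−ℕA} → ℂ{ℕG''−ℕA}. -/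
def omDelta (a : Fin n → Lat d) (ε : Set (Fin n) → Set (Fin n) → ℂ) (γ : Lat d) :
    (FaceT a → ℂ) →ₗ[ℂ] (FaceT a → ℂ) where
  toFun c := fun G'' =>
    if γ ∈ NFmNA a G''.1 then
      ∑ G' : FaceT a,
        if G''.1 ⊆ G'.1 ∧ dimF a G'.1 = dimF a G''.1 + 1 then ε G'.1 G''.1 * c G' else 0
    else 0
  map_add' x y := by
    funext G''
    by_cases hγ : γ ∈ NFmNA a G''.1
    · simp only [Pi.add_apply, hγ, if_true, ← Finset.sum_add_distrib]
      refine Finset.sum_congr rfl fun G' _ => ?_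
      by_cases h : G''.1 ⊆ G'.1 ∧ dimF a G'.1 = dimF a G''.1 + 1
      · simp [h, mul_add]
      · simp [h]
    · simp [hγ]
  map_smul' r x := by
    funext G''
    by_cases hγ : γ ∈ NFmNA a G''.1
    · simp only [Pi.smul_apply, smul_eq_mul, RingHom.id_apply, hγ, if_true, Finset.mul_sum]
      refine Finset.sum_congr rfl fun G' _ => ?_
      by_cases h : G''.1 ⊆ G'.1 ∧ dimF a G'.1 = dimF a G''.1 + 1
      · simp only [h, and_self, if_true]; ring
      · simp [h]
    · simp [hγ]

/-- Degree-γ cocycles of ω•_{S_A} in cohomological degree `i`. -/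
def omZ (a : Fin n → Lat d) (ε : Set (Fin n) → Set (Fin n) → ℂ) (i : ℤ) (γ : Lat d) :
    Submodule ℂ (FaceT a → ℂ) :=
  omChain a i γ ⊓ LinearMap.ker (omDelta a ε γ)

/-- Degree-γ coboundaries of ω•_{S_A} in cohomological degree `i`. -/
def omB (a : Fin n → Lat d) (ε : Set (Fin n) → Set (Fin n) → ℂ) (i : ℤ) (γ : Lat d) :
    Submodule ℂ (FaceT a → ℂ) :=
  Submodule.map (omDelta a ε γ) (omChain a (i - 1) γ)

/-- Nonvanishing of H^i(ω•_{S_A})_γ. -/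
def omHne (a : Fin n → Lat d) (ε : Set (Fin n) → Set (Fin n) → ℂ) (i : ℤ) (γ : Lat d) : Prop :=
  ¬ (omZ a ε i γ ≤ omB a ε i γ)

/-- A ℤ^d-graded S_A-module, presented by its grading together with the (degree-shifting)
action of the monomials t^u, u ∈ ℕA. -/
structure GradedSAMod (a : Fin n → Lat d) (M : Type) [AddCommGroup M] [Module ℂ M] where
  decomp : Lat d → Submodule ℂ M
  internal : DirectSum.IsInternal decomp
  act : (u : Lat d) → u ∈ NA a → (M →ₗ[ℂ] M)
  act_zero : ∀ h0 : (0 : Lat d) ∈ NA a, act 0 h0 = LinearMap.id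
  act_add : ∀ (u : Lat d) (hu : u ∈ NA a) (v : Lat d) (hv : v ∈ NA a) (huv : u + v ∈ NA a),
    act (u + v) huv = (act u hu).comp (act v hv)
  act_grade : ∀ (u : Lat d) (hu : u ∈ NA a) (γ : Lat d), ∀ m ∈ decomp γ,
    act u hu m ∈ decomp (γ + u)

/-- Finite generation over S_A. -/
def GradedSAMod.FGmod {a : Fin n → Lat d} {M : Type} [AddCommGroup M] [Module ℂ M]
    (g : GradedSAMod a M) : Prop :=
  ∃ S : Finset M, ∀ m : M,
    m ∈ Submodule.span ℂ {x | ∃ u, ∃ hu : u ∈ NA a, ∃ s ∈ S, x = g.act u hu s}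

/-- Degrees of nonzero homogeneous elements of `M` that survive in the localization
`M[∂^{−H}]` (i.e. are killed by no power of t^{σ_H}). -/
def GradedSAMod.survTdeg {a : Fin n → Lat d} {M : Type} [AddCommGroup M] [Module ℂ M]
    (g : GradedSAMod a M) (H : Set (Fin n)) : Set (Lat d) :=
  {γ | ∃ m ∈ g.decomp γ, m ≠ 0 ∧ ∀ (k : ℕ) (hk : k • sigmaF a H ∈ NA a), g.act _ hk m ≠ 0}

/-- The quasidegree set of the localization `M[∂^{−H}]` of a finitely generated graded
module `M`: the union over `k` of the Zariski closures of the true degree sets of the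
finitely generated graded submodules t^{−kσ_H}·M of the localization. -/
def GradedSAMod.qdegLoc {a : Fin n → Lat d} {M : Type} [AddCommGroup M] [Module ℂ M]
    (g : GradedSAMod a M) (H : Set (Fin n)) : Set (CS d) :=
  ⋃ k : ℕ, zClosure (toC '' {γ : Lat d | γ + k • sigmaF a H ∈ g.survTdeg H})

/-- A ℂ-submodule is graded: it is spanned by its homogeneous elements. -/
def IsGradedSubC {d : ℕ} {M : Type} [AddCommGroup M] [Module ℂ M]
    (decomp : Lat d → Submodule ℂ M) (N : Submodule ℂ M) : Prop :=
  N = Submodule.span ℂ ((N : Set M) ∩ ⋃ γ : Lat d, (decomp γ : Set M))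

/-- A ℂ-submodule is an S_A-submodule: stable under the monomial action. -/
def IsStableSub {a : Fin n → Lat d} {M : Type} [AddCommGroup M] [Module ℂ M]
    (g : GradedSAMod a M) (N : Submodule ℂ M) : Prop :=
  ∀ (u : Lat d) (hu : u ∈ NA a), ∀ m ∈ N, g.act u hu m ∈ N

/-- The semigroup ring S_A = ℂ[ℕA] as a subalgebra of ℂ[ℤ^d]. -/
def SAlg (a : Fin n → Lat d) : Subalgebra ℂ (Laur d) :=
  Algebra.adjoin ℂ {x | ∃ α ∈ NA a, x = mono α}

/-- The monomial t^u, u ∈ ℕA, as an element of S_A. -/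
def smono (a : Fin n → Lat d) (u : Lat d) (hu : u ∈ NA a) : ↥(SAlg a) :=
  ⟨mono u, Algebra.subset_adjoin ⟨u, hu, rfl⟩⟩

/-- The underlying ℂ-vector space of the monomial module ℂ{E}: finitely supported
functions on `E`. -/
abbrev wMod (d : ℕ) (E : Set (Lat d)) := ↥(Finsupp.supported ℂ ℂ E)

/-- The action of the monomial t^w on ℂ{E}: shift the degree by `w`, truncate back to `E`. -/
def wAct {d : ℕ} (E : Set (Lat d)) (w : Lat d) : wMod d E →ₗ[ℂ] wMod d E :=
  (Finsupp.restrictDom ℂ ℂ E).comp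
    ((Finsupp.lmapDomain ℂ ℂ (fun γ => γ + w)).comp (Finsupp.supported ℂ ℂ E).subtype)

/-- The elements annihilated by some power of the ideal generated by the t^{a_i}, i ∉ F. -/
def torsionAt (a : Fin n → Lat d) (F : Set (Fin n)) {ML : Type} [AddCommGroup ML]
    [Module ℂ ML] (TL : (u : Lat d) → u ∈ NA a → (ML →ₗ[ℂ] ML)) : Set ML :=
  {y | ∃ k : ℕ, ∀ f : Fin k → Fin n, (∀ j, f j ∉ F) →
    ∀ h : (∑ j, a (f j)) ∈ NA a, TL (∑ j, a (f j)) h y = 0}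

/-- The toric ideal I_A ⊆ R_A = ℂ[∂_1,…,∂_n]. -/
def toricIdeal (a : Fin n → Lat d) : Ideal (MvPolynomial (Fin n) ℂ) :=
  RingHom.ker (MvPolynomial.aeval (fun i => mono (a i)) : MvPolynomial (Fin n) ℂ →ₐ[ℂ] Laur d)

/-- The ideal I_F^A = I_A + ⟨∂_i : a_i ∉ F⟩ of R_A. -/
def IFA (a : Fin n → Lat d) (F : Set (Fin n)) : Ideal (MvPolynomial (Fin n) ℂ) :=
  toricIdeal a ⊔ Ideal.span {p | ∃ i, i ∉ F ∧ p = MvPolynomial.X i}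

/-- An R_A-submodule is graded: it is spanned by its homogeneous elements. -/
def IsGradedSubR {d n : ℕ} {M : Type} [AddCommGroup M] [Module ℂ M]
    [Module (MvPolynomial (Fin n) ℂ) M]
    (decomp : Lat d → Submodule ℂ M) (N : Submodule (MvPolynomial (Fin n) ℂ) M) : Prop :=
  N = Submodule.span (MvPolynomial (Fin n) ℂ) ((N : Set M) ∩ ⋃ γ : Lat d, (decomp γ : Set M))

/-- `h` is the primitive integral support function of the facet `G`. -/
def IsPISF (a : Fin n → Lat d) (G : Set (Fin n)) (h : Lat d →ₗ[ℤ] ℤ) : Prop :=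
  (∃ x, h x = 1) ∧ (∀ i, 0 ≤ h (a i)) ∧ (∀ i, h (a i) = 0 ↔ i ∈ G)

/-- The ℂ-linear extension of an integral linear form to ℂ^d. -/
def hC {d : ℕ} (h : Lat d →ₗ[ℤ] ℤ) (β : CS d) : ℂ :=
  ∑ j : Fin d, β j * ((h (Pi.single j 1) : ℤ) : ℂ)


section Aux

variable {d n : ℕ}

lemma toC_add (x y : Lat d) : toC (x + y) = toC x + toC y := by
  funext j; simp [toC]

lemma toC_sub (x y : Lat d) : toC (x - y) = toC x - toC y := by
  funext j; simp [toC]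

lemma toR_add (x y : Lat d) : toR (x + y) = toR x + toR y := by
  funext j; simp [toR]

lemma cone_zero (a : Fin n → Lat d) (F : Set (Fin n)) : (0 : Fin d → ℝ) ∈ cone a F := by
  refine ⟨0, fun i => le_refl 0, fun i _ => rfl, ?_⟩
  simp

lemma cone_add (a : Fin n → Lat d) (F : Set (Fin n)) {x y : Fin d → ℝ}
    (hx : x ∈ cone a F) (hy : y ∈ cone a F) : x + y ∈ cone a F := by
  obtain ⟨c, hc0, hcF, hcx⟩ := hx
  obtain ⟨e, he0, heF, hey⟩ := hy
  refine ⟨c + e, fun i => add_nonneg (hc0 i) (he0 i),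
    fun i hi => by simp [hcF i hi, heF i hi], ?_⟩
  rw [hcx, hey, ← Finset.sum_add_distrib]
  refine Finset.sum_congr rfl fun i _ => ?_
  simp [add_smul]

lemma col_mem_cone (a : Fin n → Lat d) (F : Set (Fin n)) {i : Fin n} (hi : i ∈ F) :
    toR (a i) ∈ cone a F := by
  refine ⟨fun k => if k = i then 1 else 0, fun k => by positivity,
    fun k hk => by
      by_cases h : k = i
      · exact absurd (h ▸ hi) hk
      · simp [h], ?_⟩
  rw [Finset.sum_eq_single i]
  · simp
  · intro b _ hb; simp [hb]
  · intro h; exact absurd (Finset.mem_univ i) h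

lemma toR_mem_cone_of_NFace (a : Fin n → Lat d) (F : Set (Fin n)) {x : Lat d}
    (hx : x ∈ NFace a F) : toR x ∈ cone a F := by
  induction hx using AddSubmonoid.closure_induction with
  | mem y hy => obtain ⟨i, hi, rfl⟩ := hy; exact col_mem_cone a F hi
  | zero =>
      have h0 : toR (0 : Lat d) = 0 := by funext j; simp [toR]
      rw [h0]; exact cone_zero a F
  | add y z _ _ hy hz => rw [toR_add]; exact cone_add a F hy hz

lemma NA_eq_NFace_univ (a : Fin n → Lat d) : NA a = NFace a Set.univ := by
  unfold NA NFace; rw [Set.image_univ]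

lemma toR_mem_cone_of_NA (a : Fin n → Lat d) {x : Lat d} (hx : x ∈ NA a) :
    toR x ∈ cone a Set.univ :=
  toR_mem_cone_of_NFace a Set.univ (by rwa [← NA_eq_NFace_univ])

lemma col_mem_NA (a : Fin n → Lat d) (i : Fin n) : a i ∈ NA a :=
  AddSubmonoid.subset_closure ⟨i, rfl⟩

lemma sigmaF_mem_NFace (a : Fin n → Lat d) {H F : Set (Fin n)} (hHF : H ⊆ F) :
    sigmaF a H ∈ NFace a F := by
  refine AddSubmonoid.sum_mem _ fun i _ => ?_
  by_cases hi : i ∈ H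
  · simp only [hi, if_true]
    exact AddSubmonoid.subset_closure ⟨i, hHF hi, rfl⟩
  · simp only [hi, if_false]; exact zero_mem _

lemma NFace_le_NA (a : Fin n → Lat d) (F : Set (Fin n)) : NFace a F ≤ NA a := by
  apply AddSubmonoid.closure_mono
  rintro x ⟨i, _, rfl⟩; exact ⟨i, rfl⟩

lemma sigmaF_mem_NA (a : Fin n → Lat d) (H : Set (Fin n)) : sigmaF a H ∈ NA a :=
  NFace_le_NA a H (sigmaF_mem_NFace a (le_refl H))

lemma sigmaF_split (a : Fin n → Lat d) {H : Set (Fin n)} {h : Fin n} (hh : h ∈ H) :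
    ∃ τ ∈ NA a, sigmaF a H = a h + τ := by
  refine ⟨∑ i ∈ Finset.univ.erase h, (if i ∈ H then a i else 0), ?_, ?_⟩
  · refine AddSubmonoid.sum_mem _ fun i _ => ?_
    by_cases hi : i ∈ H
    · simp only [hi, if_true]; exact col_mem_NA a i
    · simp only [hi, if_false]; exact zero_mem _
  · rw [sigmaF, ← Finset.add_sum_erase _ _ (Finset.mem_univ h)]
    simp [hh]

/-- Face absorption: if `f + σ_H ∈ ℕF` with `f ∈ ℕF` and `F` a face, then `H ⊆ F`. -/
lemma face_absorb (a : Fin n → Lat d) {F H : Set (Fin n)} (hF : IsFace a F)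
    {f f' : Lat d} (hf : f ∈ NA a) (hf' : f' ∈ NFace a F)
    (heq : f + sigmaF a H = f') (hH : ¬ H ⊆ F) : False := by
  obtain ⟨h, hhH, hhF⟩ := Set.not_subset.mp hH
  have hσ : toR (sigmaF a H) ∈ cone a F := by
    have := hF.1 (toR f) (toR (sigmaF a H)) (toR_mem_cone_of_NA a hf)
      (toR_mem_cone_of_NA a (sigmaF_mem_NA a H)) ?_
    · exact this.2
    · rw [← toR_add, heq]; exact toR_mem_cone_of_NFace a F hf'
  obtain ⟨τ, hτ, hsplit⟩ := sigmaF_split a hhH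
  have : toR (a h) ∈ cone a F := by
    have := hF.1 (toR (a h)) (toR τ) (toR_mem_cone_of_NA a (col_mem_NA a h))
      (toR_mem_cone_of_NA a hτ) ?_
    · exact this.1
    · rw [← toR_add, ← hsplit]; exact hσ
  exact hhF (hF.2 h this)

lemma toC_mem_CFace (a : Fin n → Lat d) (F : Set (Fin n)) {x : Lat d}
    (hx : x ∈ NFace a F) : toC x ∈ CFace a F := by
  induction hx using AddSubmonoid.closure_induction with
  | mem y hy =>
      exact Submodule.subset_span ⟨y, hy, rfl⟩
  | zero =>
      have : toC (0 : Lat d) = 0 := by funext j; simp [toC]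
      rw [this]; exact Submodule.zero_mem _
  | add y z _ _ hy hz => rw [toC_add]; exact Submodule.add_mem _ hy hz

/-! Zariski closure basics. -/

lemma subset_zClosure {T : Set (CS d)} : T ⊆ zClosure T := fun x hx p hp => hp x hx

lemma zClosure_mono {T T' : Set (CS d)} (h : T ⊆ T') : zClosure T ⊆ zClosure T' :=
  fun x hx p hp => hx p (fun y hy => hp y (h hy))

lemma zClosure_subset {T Z : Set (CS d)} (hTZ : T ⊆ Z) (hZ : IsZClosed Z) :
    zClosure T ⊆ Z := fun x hx => hZ (zClosure_mono hTZ hx)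

/-- A linear polynomial computing `φ (y - c)`. -/
lemma exists_linear_poly (φ : Module.Dual ℂ (CS d)) (c : CS d) :
    ∃ p : MvPolynomial (Fin d) ℂ, ∀ y : CS d, MvPolynomial.eval y p = φ (y - c) := by
  refine ⟨(∑ j : Fin d, MvPolynomial.C (φ fun k => if j = k then 1 else 0) *
      MvPolynomial.X j) - MvPolynomial.C (φ c), fun y => ?_⟩
  have hy : φ y = ∑ j : Fin d, y j * φ (fun k => if j = k then 1 else 0) := by
    conv_lhs => rw [pi_eq_sum_univ y]
    rw [map_sum]
    exact Finset.sum_congr rfl fun j _ => by rw [map_smul]; rfl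
  rw [show φ (y - c) = φ y - φ c from map_sub φ y c, hy]
  rw [map_sub, map_sum]
  simp only [MvPolynomial.eval_mul, MvPolynomial.eval_C, MvPolynomial.eval_X]
  congr 1
  exact Finset.sum_congr rfl fun j _ => mul_comm _ _

/-- Affine subspaces are Zariski closed. -/
lemma isZClosed_affine (c : CS d) (V : Submodule ℂ (CS d)) :
    IsZClosed {x : CS d | x - c ∈ V} := by
  intro x hx
  by_contra hxV
  have hq : Submodule.mkQ V (x - c) ≠ 0 := by
    rw [Submodule.mkQ_apply, ne_eq, Submodule.Quotient.mk_eq_zero]; exact hxV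
  obtain ⟨ψ, hψ⟩ := not_forall.mp ((not_iff_not.mpr
    (Module.forall_dual_apply_eq_zero_iff ℂ (Submodule.mkQ V (x - c)))).mpr hq)
  set φ : Module.Dual ℂ (CS d) := ψ.comp (Submodule.mkQ V) with hφ
  obtain ⟨p, hp⟩ := exists_linear_poly φ c
  have hvan : ∀ y ∈ {x : CS d | x - c ∈ V}, MvPolynomial.eval y p = 0 := by
    intro y hy
    rw [hp]
    show ψ (Submodule.mkQ V (y - c)) = 0
    have h0 : Submodule.mkQ V (y - c) = 0 := by
      rwa [Submodule.mkQ_apply, Submodule.Quotient.mk_eq_zero]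
    rw [h0]; exact map_zero ψ
  have := hx p hvan
  rw [hp] at this
  exact hψ this

/-- Finite unions of Zariski closed sets are Zariski closed. -/
lemma isZClosed_iUnion {r : ℕ} (Z : Fin r → Set (CS d)) (P : Fin r → Prop)
    (hZ : ∀ i, IsZClosed (Z i)) : IsZClosed (⋃ (i : Fin r) (_ : P i), Z i) := by
  intro x hx
  by_contra hxU
  simp only [Set.mem_iUnion, not_exists] at hxU
  have hex : ∀ i : Fin r, P i → ∃ p : MvPolynomial (Fin d) ℂ,
      (∀ y ∈ Z i, MvPolynomial.eval y p = 0) ∧ MvPolynomial.eval x p ≠ 0 := by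
    intro i hPi
    have hxi : x ∉ zClosure (Z i) := fun hc => hxU i hPi (hZ i hc)
    simp only [zClosure, Set.mem_setOf_eq] at hxi
    push_neg at hxi
    exact hxi
  choose! p hp1 hp2 using hex
  set s : Finset (Fin r) := Finset.univ.filter (fun i => P i) with hs
  have hq : ∀ y ∈ (⋃ (i : Fin r) (_ : P i), Z i),
      MvPolynomial.eval y (∏ i ∈ s, p i) = 0 := by
    intro y hy
    simp only [Set.mem_iUnion] at hy
    obtain ⟨i, hPi, hyi⟩ := hy
    rw [map_prod]
    exact Finset.prod_eq_zero (Finset.mem_filter.mpr ⟨Finset.mem_univ i, hPi⟩)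
      (hp1 i hPi y hyi)
  have := hx _ hq
  rw [map_prod] at this
  obtain ⟨i, hi, h0⟩ := Finset.prod_eq_zero_iff.mp this
  exact hp2 i (Finset.mem_filter.mp hi).2 h0

lemma mv_aeval_eq_eval (y : CS d) (p : MvPolynomial (Fin d) ℂ) :
    MvPolynomial.aeval y p = MvPolynomial.eval y p := rfl

lemma eval_aeval_mv (g : Fin d → MvPolynomial (Fin d) ℂ) (y : CS d)
    (p : MvPolynomial (Fin d) ℂ) :
    MvPolynomial.eval y (MvPolynomial.aeval g p) =
      MvPolynomial.eval (fun j => MvPolynomial.eval y (g j)) p := by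
  have h : (MvPolynomial.aeval y : MvPolynomial (Fin d) ℂ →ₐ[ℂ] ℂ).comp
      (MvPolynomial.aeval g)
      = MvPolynomial.aeval (fun j => MvPolynomial.eval y (g j)) := by
    apply MvPolynomial.algHom_ext
    intro i
    simp [mv_aeval_eq_eval]
  have h2 := congrArg (fun ψ : MvPolynomial (Fin d) ℂ →ₐ[ℂ] ℂ => ψ p) h
  simpa [mv_aeval_eq_eval] using h2

lemma poly_aeval_eq_eval (t : ℂ) (q : Polynomial ℂ) :
    Polynomial.aeval t q = Polynomial.eval t q := Polynomial.aeval_def t q ▸ rfl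

lemma polyeval_aeval (g : Fin d → Polynomial ℂ) (t : ℂ) (p : MvPolynomial (Fin d) ℂ) :
    Polynomial.eval t (MvPolynomial.aeval g p) =
      MvPolynomial.eval (fun j => Polynomial.eval t (g j)) p := by
  have h : (Polynomial.aeval t : Polynomial ℂ →ₐ[ℂ] ℂ).comp (MvPolynomial.aeval g)
      = MvPolynomial.aeval (fun j => Polynomial.eval t (g j)) := by
    apply MvPolynomial.algHom_ext
    intro i
    simp [poly_aeval_eq_eval]
  have h2 := congrArg (fun ψ : MvPolynomial (Fin d) ℂ →ₐ[ℂ] ℂ => ψ p) h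
  simpa [poly_aeval_eq_eval, mv_aeval_eq_eval] using h2

/-- The ℂ-affine span of `α + ℕF` is contained in the Zariski closure of (the image in ℂ^d
of) `α + ℕF`. -/
lemma affine_subset_zClosure (a : Fin n → Lat d) (F : Set (Fin n)) (α : Lat d) :
    {x : CS d | x - toC α ∈ CFace a F} ⊆
      zClosure (toC '' {γ : Lat d | ∃ f ∈ NFace a F, γ = α + f}) := by
  set T : Set (CS d) := toC '' {γ : Lat d | ∃ f ∈ NFace a F, γ = α + f} with hTdef
  -- Step 1: stability of the closure under adding complex multiples of columns of F.
  have step1 : ∀ x ∈ zClosure T, ∀ i ∈ F, ∀ cc : ℂ,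
      x + cc • toC (a i) ∈ zClosure T := by
    intro x hx i hiF cc p hp
    set v : CS d := toC (a i) with hv
    have key : ∀ t : ℂ, (∃ k : ℕ, t = (k : ℕ)) →
        MvPolynomial.eval (fun j => x j + v j * t) p = 0 := by
      rintro t ⟨k, rfl⟩
      have hvan : ∀ y ∈ T,
          MvPolynomial.eval y
            (MvPolynomial.aeval
              (fun j => MvPolynomial.X j + MvPolynomial.C (v j * (k : ℂ))) p) = 0 := by
        rintro y ⟨γ, ⟨f, hf, rfl⟩, rfl⟩
        rw [eval_aeval_mv]
        have hpt : (fun j => MvPolynomial.eval (toC (α + f))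
            (MvPolynomial.X j + MvPolynomial.C (v j * (k : ℂ))))
            = toC (α + (f + k • a i)) := by
          funext j
          have harith : (α + (f + k • a i)) j = α j + f j + (k : ℤ) * a i j := by
            simp only [Pi.add_apply, Pi.smul_apply]
            push_cast
            ring
          simp only [map_add, MvPolynomial.eval_X, MvPolynomial.eval_C, toC, hv, harith,
            Pi.add_apply]
          push_cast
          ring
        rw [hpt]
        refine hp _ ?_
        refine Set.mem_image_of_mem _ ?_
        show ∃ f' ∈ NFace a F, α + (f + k • a i) = α + f'
        refine ⟨f + k • a i, ?_, rfl⟩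
        exact add_mem hf (AddSubmonoid.nsmul_mem _
          (AddSubmonoid.subset_closure (Set.mem_image_of_mem a hiF)) k)
      have h0 := hx _ hvan
      rw [eval_aeval_mv] at h0
      simpa using h0
    set Q : Polynomial ℂ := MvPolynomial.aeval
      (fun j => Polynomial.C (x j) + Polynomial.C (v j) * Polynomial.X) p with hQ
    have hQeval : ∀ t : ℂ, Polynomial.eval t Q =
        MvPolynomial.eval (fun j => x j + v j * t) p := by
      intro t
      rw [hQ, polyeval_aeval]
      simp
    have hQ0 : Q = 0 := by
      apply Polynomial.eq_zero_of_infinite_isRoot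
      apply Set.Infinite.mono (s := Set.range ((↑) : ℕ → ℂ))
      · rintro t ⟨k, rfl⟩
        show Polynomial.IsRoot Q _
        rw [Polynomial.IsRoot, hQeval]
        exact key _ ⟨k, rfl⟩
      · exact Set.infinite_range_of_injective Nat.cast_injective
    have := hQeval cc
    rw [hQ0] at this
    simp only [Polynomial.eval_zero] at this
    have hpt : (fun j => x j + v j * cc) = x + cc • v := by
      funext j; simp [mul_comm]
    rw [hpt] at this
    exact this.symm
  -- Step 2: build up an arbitrary point of the affine span.
  intro x hxmem
  obtain ⟨c, hcsupp, hcsum⟩ := Submodule.mem_span_set.mp hxmem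
  have claim : ∀ s : Finset (CS d), (↑s : Set (CS d)) ⊆ toC '' (a '' F) →
      ∀ z ∈ zClosure T, z + ∑ v ∈ s, c v • v ∈ zClosure T := by
    intro s
    induction s using Finset.induction with
    | empty => intro _ z hz; simpa using hz
    | @insert v s hvs ih =>
        intro hsub z hz
        have hvmem : v ∈ toC '' (a '' F) := hsub (by simp)
        obtain ⟨w, ⟨i, hiF, rfl⟩, rfl⟩ := hvmem
        have hsub' : (↑s : Set (CS d)) ⊆ toC '' (a '' F) :=
          Set.Subset.trans (by simp) hsub
        have h1 := ih hsub' z hz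
        have h2 := step1 _ h1 i hiF (c (toC (a i)))
        have : z + ∑ u ∈ insert (toC (a i)) s, c u • u
            = z + ∑ u ∈ s, c u • u + c (toC (a i)) • toC (a i) := by
          rw [Finset.sum_insert hvs]
          abel
        rw [this]
        exact h2
  have hα : toC α ∈ zClosure T := by
    apply subset_zClosure
    refine Set.mem_image_of_mem _ ?_
    show ∃ f ∈ NFace a F, α = α + f
    exact ⟨0, zero_mem _, by simp⟩
  have hx : x = toC α + ∑ v ∈ c.support, c v • v := by
    have : (c.sum fun mi r => r • mi) = ∑ v ∈ c.support, c v • v := rfl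
    rw [← this, hcsum]
    abel
  rw [hx]
  exact claim c.support hcsupp (toC α) hα

lemma act_congr {a : Fin n → Lat d} {M : Type} [AddCommGroup M] [Module ℂ M]
    (g : GradedSAMod a M) {u v : Lat d} (e : u = v) (hu : u ∈ NA a) (hv : v ∈ NA a) (m : M) :
    g.act u hu m = g.act v hv m := by subst e; rfl

end Aux


/-- If the finitely generated ℤ^d-graded S_A-module `M` has a filtration
`0 = M_0 ⊆ ⋯ ⊆ M_r = M` by graded submodules with `M_i/M_{i−1} ≅ S_{F_i}(−α_i)`, then for
every face `H ⪯ A`: qdeg M[∂^{−H}] = ⋃_{i : F_i ⪰ H} (ℂF_i + α_i). -/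
theorem qdegLoc_of_toric_filtration
    {d n : ℕ} (hd : 0 < d) (hn : 0 < n) (a : Fin n → Lat d)
    (hZA : SpansZ a) (hPt : Pointed a)
    (M : Type) [AddCommGroup M] [Module ℂ M]
    (g : GradedSAMod a M) (hfg : g.FGmod)
    (r : ℕ) (N : Fin (r + 1) → Submodule ℂ M)
    (hmono : Monotone N) (hbot : N 0 = ⊥) (htop : N (Fin.last r) = ⊤)
    (hstable : ∀ i, IsStableSub g (N i))
    (hgraded : ∀ i, IsGradedSubC g.decomp (N i))
    (Fi : Fin r → Set (Fin n)) (hFi : ∀ i, IsFace a (Fi i))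
    (αi : Fin r → Lat d)
    -- the graded pieces of M_i/M_{i−1} vanish outside α_i + ℕF_i …
    (hq1 : ∀ (i : Fin r) (γ : Lat d), (¬ ∃ f ∈ NFace a (Fi i), γ = αi i + f) →
      N i.succ ⊓ g.decomp γ ≤ N i.castSucc)
    -- … and are one-dimensional on α_i + ℕF_i …
    (hq2 : ∀ (i : Fin r) (γ : Lat d), (∃ f ∈ NFace a (Fi i), γ = αi i + f) →
      (∃ m, m ∈ N i.succ ⊓ g.decomp γ ∧ m ∉ N i.castSucc) ∧
      (∀ m m' : M, m ∈ N i.succ ⊓ g.decomp γ → m' ∈ N i.succ ⊓ g.decomp γ →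
        m ∉ N i.castSucc → ∃ c : ℂ, m' - c • m ∈ N i.castSucc))
    -- … and the monomials of ℕF_i act bijectively on them (so M_i/M_{i−1} ≅ S_{F_i}(−α_i)).
    (hq3 : ∀ (i : Fin r) (u : Lat d), u ∈ NFace a (Fi i) → ∀ (hu : u ∈ NA a)
      (γ : Lat d) (m : M), (∃ f ∈ NFace a (Fi i), γ = αi i + f) →
      m ∈ N i.succ ⊓ g.decomp γ → m ∉ N i.castSucc → g.act u hu m ∉ N i.castSucc)
    (H : Set (Fin n)) (hH : IsFace a H) :
    g.qdegLoc H =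
      ⋃ (i : Fin r) (_ : H ⊆ Fi i), {x : CS d | x - toC (αi i) ∈ CFace a (Fi i)} := by
  classical
  set σ := sigmaF a H with hσdef
  have hσNA : σ ∈ NA a := sigmaF_mem_NA a H
  -- Key induction along the filtration.
  have key : ∀ j : Fin (r+1), ∀ (δ : Lat d) (m : M), m ∈ N j → m ∈ g.decomp δ → m ≠ 0 →
      (∀ (k : ℕ) (hk : k • σ ∈ NA a), g.act _ hk m ≠ 0) →
      ∃ i : Fin r, H ⊆ Fi i ∧ ∃ (l : ℕ), ∃ f ∈ NFace a (Fi i), δ + l • σ = αi i + f := by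
    intro j
    induction j using Fin.induction with
    | zero =>
        intro δ m hmN _ hm0 _
        rw [hbot] at hmN
        exact absurd ((Submodule.mem_bot ℂ).mp hmN) hm0
    | succ i IH =>
        intro δ m hmN hmδ hm0 hsurv
        by_cases hcase : m ∈ N i.castSucc
        · exact IH δ m hcase hmδ hm0 hsurv
        · have hδ : ∃ f ∈ NFace a (Fi i), δ = αi i + f := by
            by_contra hno
            exact hcase (hq1 i δ hno (Submodule.mem_inf.mpr ⟨hmN, hmδ⟩))
          obtain ⟨f, hf, hδf⟩ := hδ
          by_cases hHF : H ⊆ Fi i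
          · exact ⟨i, hHF, 0, f, hf, by simpa using hδf⟩
          · set m' := g.act σ hσNA m with hm'def
            have hm'N : m' ∈ N i.succ := hstable i.succ σ hσNA m hmN
            have hm'δ : m' ∈ g.decomp (δ + σ) := g.act_grade σ hσNA δ m hmδ
            have hnot : ¬ ∃ f' ∈ NFace a (Fi i), δ + σ = αi i + f' := by
              rintro ⟨f', hf', heq⟩
              refine face_absorb a (hFi i) (NFace_le_NA a _ hf) hf' ?_ hHF
              have h2 : αi i + (f + σ) = αi i + f' := by
                rw [← heq, hδf]; abel
              exact add_left_cancel h2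
            have hm'low : m' ∈ N i.castSucc :=
              hq1 i (δ + σ) hnot (Submodule.mem_inf.mpr ⟨hm'N, hm'δ⟩)
            have hm'0 : m' ≠ 0 := by
              have h1 : (1 : ℕ) • σ ∈ NA a := by rwa [one_nsmul]
              have h2 := hsurv 1 h1
              rwa [act_congr g (one_nsmul σ) h1 hσNA m] at h2
            have hsurv' : ∀ (k : ℕ) (hk : k • σ ∈ NA a), g.act _ hk m' ≠ 0 := by
              intro k hk
              have hks : k • σ + σ ∈ NA a := add_mem hk hσNA
              have hk1 : (k+1) • σ ∈ NA a := by rw [succ_nsmul]; exact hks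
              have h2 := hsurv (k+1) hk1
              rw [act_congr g (succ_nsmul σ k) hk1 hks m,
                g.act_add (k • σ) hk σ hσNA hks, LinearMap.comp_apply] at h2
              exact h2
            obtain ⟨i', hi', l, f', hf', heq⟩ := IH (δ + σ) m' hm'low hm'δ hm'0 hsurv'
            refine ⟨i', hi', l + 1, f', hf', ?_⟩
            rw [succ_nsmul, ← heq]
            abel
  have hclosed : IsZClosed (⋃ (i : Fin r) (_ : H ⊆ Fi i),
      {x : CS d | x - toC (αi i) ∈ CFace a (Fi i)}) :=
    isZClosed_iUnion _ _ (fun i => isZClosed_affine _ _)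
  apply Set.Subset.antisymm
  · -- qdeg M[∂^{-H}] ⊆ ⋃ (ℂF_i + α_i)
    refine Set.iUnion_subset fun k => ?_
    refine zClosure_subset ?_ hclosed
    rintro x ⟨γ, hγ, rfl⟩
    obtain ⟨m, hmδ, hm0, hsurv⟩ := hγ
    have hmtop : m ∈ N (Fin.last r) := by rw [htop]; trivial
    obtain ⟨i, hHFi, l, f, hf, heq⟩ := key (Fin.last r) (γ + k • σ) m hmtop hmδ hm0 hsurv
    refine Set.mem_iUnion.mpr ⟨i, Set.mem_iUnion.mpr ⟨hHFi, ?_⟩⟩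
    show toC γ - toC (αi i) ∈ CFace a (Fi i)
    have heq2 : γ - αi i = f - k • σ - l • σ := by
      funext j
      have h := congrFun heq j
      simp only [Pi.add_apply, Pi.sub_apply] at h ⊢
      omega
    have hσF : σ ∈ NFace a (Fi i) := sigmaF_mem_NFace a hHFi
    rw [← toC_sub, heq2, toC_sub, toC_sub]
    exact sub_mem (sub_mem (toC_mem_CFace a (Fi i) hf)
        (toC_mem_CFace a (Fi i) (AddSubmonoid.nsmul_mem _ hσF k)))
      (toC_mem_CFace a (Fi i) (AddSubmonoid.nsmul_mem _ hσF l))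
  · -- ⋃ (ℂF_i + α_i) ⊆ qdeg M[∂^{-H}]
    refine Set.iUnion_subset fun i => Set.iUnion_subset fun hHFi => ?_
    intro x hxmem
    have hE : {γ : Lat d | ∃ f ∈ NFace a (Fi i), γ = αi i + f} ⊆
        {γ : Lat d | γ + (0:ℕ) • σ ∈ g.survTdeg H} := by
      rintro γ ⟨f, hf, rfl⟩
      show αi i + f + (0:ℕ) • σ ∈ g.survTdeg H
      rw [zero_nsmul, add_zero]
      obtain ⟨⟨m, hm, hmnot⟩, _⟩ := hq2 i (αi i + f) ⟨f, hf, rfl⟩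
      refine ⟨m, (Submodule.mem_inf.mp hm).2, ?_, ?_⟩
      · intro h0; exact hmnot (h0 ▸ zero_mem _)
      · intro k hk
        have hkF : k • sigmaF a H ∈ NFace a (Fi i) :=
          AddSubmonoid.nsmul_mem _ (sigmaF_mem_NFace a hHFi) k
        have h3 := hq3 i (k • sigmaF a H) hkF hk (αi i + f) m ⟨f, hf, rfl⟩ hm hmnot
        intro h0; exact h3 (h0 ▸ zero_mem _)
    refine Set.mem_iUnion.mpr ⟨0, ?_⟩
    exact zClosure_mono (Set.image_mono hE)
      (affine_subset_zClosure a (Fi i) (αi i) hxmem)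

end

end GKZ
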